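/- arXiv:1802.09658 — 3 statements merged into one kernel-verified Lean document; each statement's English description precedes it below -/
import Mathlib

section
/- For every positive integer n and every real ε > 0, there exists a positive integer k₀ = k₀(ε, n) such that for every nonempty compact convex set Δ contained in the unit cube [0,1]^n and every integer k ≥ k₀, one has |#(kΔ ∩ ℤ^n)/k^n − vol(Δ)| ≤ ε. -/
open Pointwise MeasureTheory Set

namespace LatticeAux

/-! ### Scalar interval lemmas -/

lemma scalar_up (F : Set ℝ) (a b : ℝ) (hF : Convex ℝ F) (hsub : F ⊆ Icc a b) (hne : F.Nonempty) :
    volume (F + Icc (0:ℝ) 1) ≤ volume F + 1 := by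
  have hbdd : BddAbove F := ⟨b, fun x hx => (hsub hx).2⟩
  have hbdd' : BddBelow F := ⟨a, fun x hx => (hsub hx).1⟩
  set A := sInf F
  set B := sSup F
  have h1 : F + Icc (0:ℝ) 1 ⊆ Icc A (B+1) := by
    rintro x ⟨f, hf, u, hu, rfl⟩
    exact ⟨le_add_of_le_of_nonneg (csInf_le hbdd' hf) hu.1,
      add_le_add (le_csSup hbdd hf) hu.2⟩
  have h2 : Ioo A B ⊆ F := by
    intro x hx
    obtain ⟨u, hu, hux⟩ := (csInf_lt_iff hbdd' hne).1 hx.1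
    obtain ⟨v, hv, hxv⟩ := (lt_csSup_iff hbdd hne).1 hx.2
    exact hF.ordConnected.out hu hv ⟨hux.le, hxv.le⟩
  calc volume (F + Icc (0:ℝ) 1) ≤ volume (Icc A (B+1)) := measure_mono h1
    _ = ENNReal.ofReal (B + 1 - A) := by rw [Real.volume_Icc]
    _ ≤ ENNReal.ofReal (B - A) + ENNReal.ofReal 1 := by
        rw [show B + 1 - A = (B - A) + 1 by ring]; exact ENNReal.ofReal_add_le
    _ ≤ volume F + 1 := by
        rw [← Real.volume_Ioo (a := A) (b := B), ENNReal.ofReal_one]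
        exact add_le_add (measure_mono (μ := volume) h2) le_rfl

lemma scalar_down (F : Set ℝ) (a b : ℝ) (hF : Convex ℝ F) (hsub : F ⊆ Icc a b) :
    volume F ≤ volume {t : ℝ | ∀ s ∈ Icc (0:ℝ) 1, t - s ∈ F} + 1 := by
  rcases F.eq_empty_or_nonempty with rfl | hne
  · simp
  have hbdd : BddAbove F := ⟨b, fun x hx => (hsub hx).2⟩
  have hbdd' : BddBelow F := ⟨a, fun x hx => (hsub hx).1⟩
  set A := sInf F
  set B := sSup F
  have h2 : Ioo A B ⊆ F := by
    intro x hx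
    obtain ⟨u, hu, hux⟩ := (csInf_lt_iff hbdd' hne).1 hx.1
    obtain ⟨v, hv, hxv⟩ := (lt_csSup_iff hbdd hne).1 hx.2
    exact hF.ordConnected.out hu hv ⟨hux.le, hxv.le⟩
  have h3 : Ioo (A+1) B ⊆ {t : ℝ | ∀ s ∈ Icc (0:ℝ) 1, t - s ∈ F} := by
    rintro t ht s hs
    exact h2 ⟨by nlinarith [ht.1, hs.2], by nlinarith [ht.2, hs.1]⟩
  have h1 : F ⊆ Icc A B := fun x hx => ⟨csInf_le hbdd' hx, le_csSup hbdd hx⟩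
  calc volume F ≤ volume (Icc A B) := measure_mono h1
    _ = ENNReal.ofReal (B - A) := Real.volume_Icc
    _ ≤ ENNReal.ofReal (B - (A+1)) + ENNReal.ofReal 1 := by
        rw [show B - A = (B - (A+1)) + 1 by ring]; exact ENNReal.ofReal_add_le
    _ ≤ volume {t : ℝ | ∀ s ∈ Icc (0:ℝ) 1, t - s ∈ F} + 1 := by
        rw [← Real.volume_Ioo (a := A+1) (b := B), ENNReal.ofReal_one]
        exact add_le_add (measure_mono (μ := volume) h3) le_rfl

/-! ### insertNth helpers -/

variable {m : ℕ}

lemma insertNth_sub_smul_single (i : Fin (m+1)) (t u : ℝ) (y : Fin m → ℝ) :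
    (i.insertNth t y : Fin (m+1) → ℝ) - u • (Pi.single i 1 : Fin (m+1) → ℝ)
      = i.insertNth (t - u) y := by
  have h := Fin.insertNth_sub_same (α := fun _ => ℝ) i t (t - u) y
  have hs : u • (Pi.single i 1 : Fin (m+1) → ℝ) = Pi.single i (t - (t-u)) := by
    simp [← Pi.single_smul]
  rw [hs, ← h]; abel

lemma insertNth_convex_comb (i : Fin (m+1)) (y : Fin m → ℝ) (t₁ t₂ θ₁ θ₂ : ℝ)
    (h : θ₁ + θ₂ = 1) :
    (i.insertNth (θ₁ * t₁ + θ₂ * t₂) y : Fin (m+1) → ℝ)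
      = θ₁ • (i.insertNth t₁ y : Fin (m+1) → ℝ) + θ₂ • (i.insertNth t₂ y : Fin (m+1) → ℝ) := by
  refine funext (Fin.succAboveCases i ?_ ?_)
  · simp
  · intro j
    simp only [Fin.insertNth_apply_succAbove, Pi.add_apply, Pi.smul_apply, smul_eq_mul]
    linear_combination - y j * h

/-! ### Fibers -/

/-- Fiber of a set along coordinate `i`. -/
def fib (K : Set (Fin (m+1) → ℝ)) (i : Fin (m+1)) (y : Fin m → ℝ) : Set ℝ :=
  {t | (i.insertNth t y : Fin (m+1) → ℝ) ∈ K}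

lemma fib_eq_preimage (K : Set (Fin (m+1) → ℝ)) (i : Fin (m+1)) (y : Fin m → ℝ) :
    fib K i y = (fun t => (t, y)) ⁻¹'
      ((MeasurableEquiv.piFinSuccAbove (fun _ => ℝ) i).symm ⁻¹' K) := by
  ext t
  simp [fib, MeasurableEquiv.piFinSuccAbove_symm_apply, Fin.insertNthEquiv]

lemma volume_eq_lintegral_fib (K : Set (Fin (m+1) → ℝ)) (hK : MeasurableSet K) (i : Fin (m+1)) :
    volume K = ∫⁻ y : Fin m → ℝ, volume (fib K i y) := by
  have hmp := measurePreserving_piFinSuccAbove (fun _ : Fin (m+1) => (volume : Measure ℝ)) i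
  have hKm : MeasurableSet
      ((MeasurableEquiv.piFinSuccAbove (fun _ : Fin (m+1) => ℝ) i).symm ⁻¹' K) :=
    (MeasurableEquiv.piFinSuccAbove (fun _ => ℝ) i).symm.measurable hK
  have h1 := (hmp.symm (MeasurableEquiv.piFinSuccAbove (fun _ => ℝ) i)).measure_preimage hK.nullMeasurableSet
  rw [volume_pi, ← h1, Measure.prod_apply_symm hKm]
  rw [show (volume : Measure (Fin m → ℝ)) = Measure.pi fun _ => volume from volume_pi]
  exact lintegral_congr fun y => by rw [fib_eq_preimage]

lemma measurable_volume_fib (K : Set (Fin (m+1) → ℝ)) (hK : MeasurableSet K) (i : Fin (m+1)) :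
    Measurable fun y => volume (fib K i y) := by
  have hKm : MeasurableSet
      ((MeasurableEquiv.piFinSuccAbove (fun _ : Fin (m+1) => ℝ) i).symm ⁻¹' K) :=
    (MeasurableEquiv.piFinSuccAbove (fun _ => ℝ) i).symm.measurable hK
  have := measurable_measure_prodMk_right (μ := (volume : Measure ℝ)) hKm
  simpa [fib_eq_preimage] using this

lemma fib_convex {K : Set (Fin (m+1) → ℝ)} (hK : Convex ℝ K) (i : Fin (m+1)) (y : Fin m → ℝ) :
    Convex ℝ (fib K i y) := by
  intro t₁ ht₁ t₂ ht₂ θ₁ θ₂ h1 h2 h12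
  show (i.insertNth (θ₁ • t₁ + θ₂ • t₂) y : Fin (m+1) → ℝ) ∈ K
  rw [smul_eq_mul, smul_eq_mul, insertNth_convex_comb i y t₁ t₂ θ₁ θ₂ h12]
  exact hK ht₁ ht₂ h1 h2 h12

lemma fib_subset {K : Set (Fin (m+1) → ℝ)} {c : ℝ} (hsub : K ⊆ Icc 0 (fun _ => c))
    (i : Fin (m+1)) (y : Fin m → ℝ) : fib K i y ⊆ Icc 0 c := by
  intro t ht
  have h := hsub ht
  rw [mem_Icc] at h
  exact ⟨by simpa using h.1 i, by simpa using h.2 i⟩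

lemma fib_nonempty_mem {K : Set (Fin (m+1) → ℝ)} {c : ℝ} (hsub : K ⊆ Icc 0 (fun _ => c))
    (i : Fin (m+1)) (y : Fin m → ℝ) (h : (fib K i y).Nonempty) :
    y ∈ Icc (0 : Fin m → ℝ) (fun _ => c) := by
  obtain ⟨t, ht⟩ := h
  have h := hsub ht
  rw [mem_Icc] at h
  constructor <;> intro j
  · simpa using h.1 (i.succAbove j)
  · simpa using h.2 (i.succAbove j)


lemma mem_seg_iff {i : Fin (m+1)} {b : Fin (m+1) → ℝ} :
    b ∈ Icc (0 : Fin (m+1) → ℝ) (Pi.single i 1) ↔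
      ∃ u ∈ Icc (0:ℝ) 1, b = u • (Pi.single i 1 : Fin (m+1) → ℝ) := by
  constructor
  · rintro ⟨h0, h1⟩
    refine ⟨b i, ⟨h0 i, by simpa using h1 i⟩, funext fun j => ?_⟩
    rcases eq_or_ne j i with rfl | hj
    · simp
    · have ha := h0 j
      have hb := h1 j
      rw [Pi.single_eq_of_ne hj] at hb
      simp only [Pi.smul_apply, Pi.single_eq_of_ne hj, smul_eq_mul, mul_zero]
      exact le_antisymm hb ha
  · rintro ⟨u, hu, rfl⟩
    constructor <;> intro j
    · rcases eq_or_ne j i with rfl | hj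
      · simpa using hu.1
      · simp [Pi.single_eq_of_ne hj]
    · rcases eq_or_ne j i with rfl | hj
      · simpa using hu.2
      · simp [Pi.single_eq_of_ne hj]


/-- Erosion of `K` by `S`. -/
def ero (K S : Set (Fin (m+1) → ℝ)) : Set (Fin (m+1) → ℝ) := {x | ∀ s ∈ S, x - s ∈ K}

lemma ero_isClosed {K : Set (Fin (m+1) → ℝ)} (hK : IsClosed K) (S : Set (Fin (m+1) → ℝ)) :
    IsClosed (ero K S) := by
  have : ero K S = ⋂ s ∈ S, (fun x => x - s) ⁻¹' K := by
    ext x; simp [ero]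
  rw [this]
  exact isClosed_biInter fun s _ => hK.preimage (continuous_id.sub continuous_const)

lemma ero_subset {K S : Set (Fin (m+1) → ℝ)} (h0 : (0 : Fin (m+1) → ℝ) ∈ S) :
    ero K S ⊆ K := fun x hx => by simpa using hx 0 h0

lemma ero_convex {K S : Set (Fin (m+1) → ℝ)} (hK : Convex ℝ K) : Convex ℝ (ero K S) := by
  intro x₁ h₁ x₂ h₂ θ₁ θ₂ ha hb hab s hs
  have h' : θ₁ • (x₁ - s) + θ₂ • (x₂ - s) = θ₁ • x₁ + θ₂ • x₂ - (θ₁ + θ₂) • s := by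
    rw [smul_sub, smul_sub, add_smul]; abel
  rw [hab, one_smul] at h'
  rw [← h']
  exact hK (h₁ s hs) (h₂ s hs) ha hb hab

lemma ero_add (K A B : Set (Fin (m+1) → ℝ)) : ero K (A + B) = ero (ero K A) B := by
  ext x
  constructor
  · intro h b hb a ha
    have := h (a + b) (add_mem_add ha hb)
    rwa [show x - (a + b) = x - b - a by abel] at this
  · rintro h s ⟨a, ha, b, hb, rfl⟩
    have := h b hb a ha
    rwa [show x - b - a = x - (a + b) by abel] at this

lemma fib_add_seg (K : Set (Fin (m+1) → ℝ)) (i : Fin (m+1)) (y : Fin m → ℝ) :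
    fib (K + Icc (0 : Fin (m+1) → ℝ) (Pi.single i 1)) i y = fib K i y + Icc (0:ℝ) 1 := by
  ext t
  constructor
  · rintro ⟨a, ha, b, hb, hab⟩
    obtain ⟨u, hu, rfl⟩ := mem_seg_iff.1 hb
    refine ⟨t - u, ?_, u, hu, by ring⟩
    show (i.insertNth (t - u) y : Fin (m+1) → ℝ) ∈ K
    rw [← insertNth_sub_smul_single, ← hab]
    simpa using ha
  · rintro ⟨f, hf, u, hu, rfl⟩
    refine ⟨i.insertNth f y, hf, u • (Pi.single i 1 : Fin (m+1) → ℝ),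
      mem_seg_iff.2 ⟨u, hu, rfl⟩, ?_⟩
    have := insertNth_sub_smul_single i (f + u) u y
    rw [show f + u - u = f by ring] at this
    show (i.insertNth f y : Fin (m+1) → ℝ) + u • (Pi.single i 1 : Fin (m+1) → ℝ)
        = i.insertNth (f + u) y
    rw [← this, sub_add_cancel]

lemma fib_ero_seg (K : Set (Fin (m+1) → ℝ)) (i : Fin (m+1)) (y : Fin m → ℝ) :
    fib (ero K (Icc (0 : Fin (m+1) → ℝ) (Pi.single i 1))) i y
      = {t : ℝ | ∀ u ∈ Icc (0:ℝ) 1, t - u ∈ fib K i y} := by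
  ext t
  constructor
  · intro h u hu
    have := h (u • (Pi.single i 1 : Fin (m+1) → ℝ)) (mem_seg_iff.2 ⟨u, hu, rfl⟩)
    show (i.insertNth (t - u) y : Fin (m+1) → ℝ) ∈ K
    rwa [← insertNth_sub_smul_single]
  · intro h s hs
    obtain ⟨u, hu, rfl⟩ := mem_seg_iff.1 hs
    show (i.insertNth t y : Fin (m+1) → ℝ) - u • (Pi.single i 1 : Fin (m+1) → ℝ) ∈ K
    rw [insertNth_sub_smul_single]
    exact h u hu

lemma step_up (K : Set (Fin (m+1) → ℝ)) (hK : IsCompact K) (hconv : Convex ℝ K)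
    {c : ℝ} (hsub : K ⊆ Icc 0 (fun _ => c)) (i : Fin (m+1)) :
    volume (K + Icc (0 : Fin (m+1) → ℝ) (Pi.single i 1))
      ≤ volume K + ENNReal.ofReal c ^ m := by
  have hKS : IsCompact (K + Icc (0 : Fin (m+1) → ℝ) (Pi.single i 1)) := hK.add isCompact_Icc
  rw [volume_eq_lintegral_fib _ hKS.measurableSet i, volume_eq_lintegral_fib _ hK.measurableSet i]
  have hpt : ∀ y, volume (fib (K + Icc (0 : Fin (m+1) → ℝ) (Pi.single i 1)) i y)
      ≤ volume (fib K i y) + (Icc (0 : Fin m → ℝ) (fun _ => c)).indicator (fun _ => 1) y := by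
    intro y
    rw [fib_add_seg]
    rcases (fib K i y).eq_empty_or_nonempty with he | hne
    · simp [he]
    · rw [indicator_of_mem (fib_nonempty_mem hsub i y hne)]
      exact scalar_up _ 0 c (fib_convex hconv i y) (fib_subset hsub i y) hne
  calc ∫⁻ y, volume (fib (K + Icc (0 : Fin (m+1) → ℝ) (Pi.single i 1)) i y)
      ≤ ∫⁻ y, (volume (fib K i y)
          + (Icc (0 : Fin m → ℝ) (fun _ => c)).indicator (fun _ => 1) y) := lintegral_mono hpt
    _ = (∫⁻ y, volume (fib K i y))
          + ∫⁻ y, (Icc (0 : Fin m → ℝ) (fun _ => c)).indicator (fun _ => 1) y :=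
        lintegral_add_right _ (measurable_const.indicator measurableSet_Icc)
    _ ≤ (∫⁻ y, volume (fib K i y)) + ENNReal.ofReal c ^ m := by
        gcongr
        rw [lintegral_indicator measurableSet_Icc]
        simp [Real.volume_Icc_pi]

lemma step_down (K : Set (Fin (m+1) → ℝ)) (hK : IsCompact K) (hconv : Convex ℝ K)
    {c : ℝ} (hsub : K ⊆ Icc 0 (fun _ => c)) (i : Fin (m+1)) :
    volume K ≤ volume (ero K (Icc (0 : Fin (m+1) → ℝ) (Pi.single i 1)))
      + ENNReal.ofReal c ^ m := by
  have hE : MeasurableSet (ero K (Icc (0 : Fin (m+1) → ℝ) (Pi.single i 1))) :=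
    (ero_isClosed hK.isClosed _).measurableSet
  rw [volume_eq_lintegral_fib _ hK.measurableSet i, volume_eq_lintegral_fib _ hE i]
  have hpt : ∀ y, volume (fib K i y)
      ≤ volume (fib (ero K (Icc (0 : Fin (m+1) → ℝ) (Pi.single i 1))) i y)
        + (Icc (0 : Fin m → ℝ) (fun _ => c)).indicator (fun _ => 1) y := by
    intro y
    rcases (fib K i y).eq_empty_or_nonempty with he | hne
    · simp [he]
    · rw [indicator_of_mem (fib_nonempty_mem hsub i y hne), fib_ero_seg]
      exact scalar_down _ 0 c (fib_convex hconv i y) (fib_subset hsub i y)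
  calc ∫⁻ y, volume (fib K i y)
      ≤ ∫⁻ y, (volume (fib (ero K (Icc (0 : Fin (m+1) → ℝ) (Pi.single i 1))) i y)
          + (Icc (0 : Fin m → ℝ) (fun _ => c)).indicator (fun _ => 1) y) := lintegral_mono hpt
    _ = (∫⁻ y, volume (fib (ero K (Icc (0 : Fin (m+1) → ℝ) (Pi.single i 1))) i y))
          + ∫⁻ y, (Icc (0 : Fin m → ℝ) (fun _ => c)).indicator (fun _ => 1) y :=
        lintegral_add_right _ (measurable_const.indicator measurableSet_Icc)
    _ ≤ _ := by
        gcongr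
        rw [lintegral_indicator measurableSet_Icc]
        simp [Real.volume_Icc_pi]

/-! ### Iteration over coordinates -/

lemma Icc_add_Icc_pi {N : ℕ} (a b c d : Fin N → ℝ) (hab : a ≤ b) (hcd : c ≤ d) :
    Icc a b + Icc c d = Icc (a + c) (b + d) := by
  apply Subset.antisymm
  · rintro x ⟨p, hp, q, hq, rfl⟩
    exact ⟨add_le_add hp.1 hq.1, add_le_add hp.2 hq.2⟩
  · intro x hx
    rw [mem_Icc] at hx
    have hx1 : ∀ i, a i + c i ≤ x i := fun i => by simpa using hx.1 i
    have hx2 : ∀ i, x i ≤ b i + d i := fun i => by simpa using hx.2 i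
    set y : Fin N → ℝ := fun i => min (b i) (max (a i) (x i - d i)) with hy
    have hy1 : ∀ i, a i ≤ y i := fun i => le_min (hab i) (le_max_left _ _)
    have hy2 : ∀ i, y i ≤ b i := fun i => min_le_left _ _
    have hy3 : ∀ i, c i ≤ x i - y i := by
      intro i
      have h1 : y i ≤ x i - c i :=
        le_trans (min_le_right _ _) (max_le (by linarith [hx1 i, hcd i]) (by linarith [hcd i]))
      linarith
    have hy4 : ∀ i, x i - y i ≤ d i := by
      intro i
      have h1 : x i - d i ≤ y i := le_min (by linarith [hx2 i]) (le_max_right _ _)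
      linarith
    exact ⟨y, ⟨fun i => hy1 i, fun i => hy2 i⟩, fun i => x i - y i,
      ⟨fun i => hy3 i, fun i => hy4 i⟩, funext fun i => by simp⟩

/-- partial cube: the box whose first `j` coordinates run over `[0,1]`. -/
def cbox (m j : ℕ) : Set (Fin (m+1) → ℝ) :=
  Icc 0 (fun i : Fin (m+1) => if (i : ℕ) < j then 1 else 0)

lemma cbox_zero : cbox m 0 = {(0 : Fin (m+1) → ℝ)} := by
  have h : (fun i : Fin (m+1) => if (i : ℕ) < 0 then (1:ℝ) else 0) = (0 : Fin (m+1) → ℝ) := by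
    funext i; norm_num
  rw [cbox, h, Icc_self]

lemma cbox_nonneg {j : ℕ} :
    (0 : Fin (m+1) → ℝ) ≤ fun i : Fin (m+1) => if (i : ℕ) < j then (1:ℝ) else 0 := by
  intro i; dsimp; split_ifs <;> norm_num

lemma cbox_succ (j : ℕ) (hj : j < m + 1) :
    cbox m (j+1) = cbox m j + Icc 0 (Pi.single (⟨j, hj⟩ : Fin (m+1)) 1) := by
  have h : (fun i : Fin (m+1) => if (i : ℕ) < j + 1 then (1:ℝ) else 0)
      = (fun i : Fin (m+1) => if (i : ℕ) < j then (1:ℝ) else 0)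
        + Pi.single (⟨j, hj⟩ : Fin (m+1)) 1 := by
    funext i
    rw [Pi.add_apply, Pi.single_apply]
    rcases eq_or_ne i ⟨j, hj⟩ with rfl | hne
    · simp
    · have hij : (i : ℕ) ≠ j := fun hh => hne (Fin.ext hh)
      rw [if_neg hne, add_zero]
      split_ifs <;> first | rfl | omega
  rw [cbox, cbox, Icc_add_Icc_pi _ _ _ _ cbox_nonneg
    (fun i => by rw [Pi.single_apply]; dsimp; split_ifs <;> norm_num), zero_add, h]

lemma cbox_top : cbox m (m+1) = Icc (0 : Fin (m+1) → ℝ) 1 := by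
  have h : (fun i : Fin (m+1) => if (i : ℕ) < m+1 then (1:ℝ) else 0) = (1 : Fin (m+1) → ℝ) := by
    funext i; simp [i.isLt]
  rw [cbox, h]

lemma cbox_subset {j : ℕ} : cbox m j ⊆ Icc (0 : Fin (m+1) → ℝ) 1 := by
  rintro x ⟨h0, h1⟩
  refine ⟨h0, fun i => le_trans (h1 i) ?_⟩
  dsimp; split_ifs <;> norm_num

lemma chain_up (K : Set (Fin (m+1) → ℝ)) (hK : IsCompact K) (hconv : Convex ℝ K)
    {c : ℝ} (hc : 0 ≤ c) (hsub : K ⊆ Icc 0 (fun _ => c)) :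
    ∀ j ≤ m + 1, volume (K + cbox m j) ≤ volume K + j * ENNReal.ofReal (c+1) ^ m := by
  intro j
  induction j with
  | zero =>
    intro _
    simp [cbox_zero]
  | succ j ih =>
    intro hj
    have hj' : j < m + 1 := hj
    have hKj : IsCompact (K + cbox m j) := hK.add isCompact_Icc
    have hconvj : Convex ℝ (K + cbox m j) := hconv.add (convex_Icc _ _)
    have hsubj : K + cbox m j ⊆ Icc 0 (fun _ => c + 1) := by
      rintro x ⟨p, hp, q, hq, rfl⟩
      have h1 := hsub hp
      have h2 := cbox_subset hq
      rw [mem_Icc] at h1 h2 ⊢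
      exact ⟨fun i => add_nonneg (h1.1 i) (h2.1 i), fun i => add_le_add (h1.2 i) (h2.2 i)⟩
    calc volume (K + cbox m (j+1)) = volume ((K + cbox m j) + Icc 0 (Pi.single (⟨j, hj'⟩ : Fin (m+1)) 1)) := by
          rw [cbox_succ j hj', add_assoc]
      _ ≤ volume (K + cbox m j) + ENNReal.ofReal (c+1) ^ m :=
          step_up _ hKj hconvj hsubj _
      _ ≤ volume K + j * ENNReal.ofReal (c+1) ^ m + ENNReal.ofReal (c+1) ^ m := by
          gcongr; exact ih (le_of_lt hj')
      _ = volume K + (j+1 : ℕ) * ENNReal.ofReal (c+1) ^ m := by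
          push_cast; ring

lemma chain_down (K : Set (Fin (m+1) → ℝ)) (hK : IsCompact K) (hconv : Convex ℝ K)
    {c : ℝ} (hc : 0 ≤ c) (hsub : K ⊆ Icc 0 (fun _ => c)) :
    ∀ j ≤ m + 1, volume K ≤ volume (ero K (cbox m j)) + j * ENNReal.ofReal (c+1) ^ m := by
  have h0mem : ∀ j, (0 : Fin (m+1) → ℝ) ∈ cbox m j := fun j => ⟨le_refl _, cbox_nonneg⟩
  have hEco : ∀ j, IsCompact (ero K (cbox m j)) := fun j =>
    (hK.of_isClosed_subset (ero_isClosed hK.isClosed _) (ero_subset (h0mem j)))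
  have hEconv : ∀ j, Convex ℝ (ero K (cbox m j)) := fun j => ero_convex hconv
  have hEsub : ∀ j, ero K (cbox m j) ⊆ Icc 0 (fun _ => c + 1) := fun j x hx => by
    have := hsub (ero_subset (h0mem j) hx)
    rw [mem_Icc] at this ⊢
    exact ⟨this.1, fun i => le_trans (this.2 i) (by norm_num)⟩
  intro j
  induction j with
  | zero =>
    intro _
    have : ero K (cbox m 0) = K := by
      rw [cbox_zero]
      ext x
      simp [ero]
    simp [this]
  | succ j ih =>
    intro hj
    have hj' : j < m + 1 := hj
    calc volume K ≤ volume (ero K (cbox m j)) + j * ENNReal.ofReal (c+1) ^ m := ih (le_of_lt hj')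
      _ ≤ (volume (ero (ero K (cbox m j)) (Icc 0 (Pi.single (⟨j, hj'⟩ : Fin (m+1)) 1)))
            + ENNReal.ofReal (c+1) ^ m) + j * ENNReal.ofReal (c+1) ^ m := by
          gcongr
          exact step_down _ (hEco j) (hEconv j) (hEsub j) _
      _ = volume (ero K (cbox m (j+1))) + (j+1 : ℕ) * ENNReal.ofReal (c+1) ^ m := by
          rw [cbox_succ j hj', ero_add]
          push_cast; ring

/-! ### Lattice cubes -/

def cube (p : Fin (m+1) → ℤ) : Set (Fin (m+1) → ℝ) :=
  univ.pi fun i => Ico (p i : ℝ) ((p i : ℝ) + 1)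

lemma volume_cube (p : Fin (m+1) → ℤ) : volume (cube p) = 1 := by
  rw [cube, volume_pi_pi]
  simp [Real.volume_Ico]

lemma measurableSet_cube (p : Fin (m+1) → ℤ) : MeasurableSet (cube p) :=
  MeasurableSet.univ_pi fun i => measurableSet_Ico

lemma mem_cube {p : Fin (m+1) → ℤ} {x : Fin (m+1) → ℝ} :
    x ∈ cube p ↔ ∀ i, (p i : ℝ) ≤ x i ∧ x i < (p i : ℝ) + 1 := by
  simp [cube, Set.mem_pi]

lemma cube_floor {p : Fin (m+1) → ℤ} {x : Fin (m+1) → ℝ} (hx : x ∈ cube p) (i : Fin (m+1)) :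
    ⌊x i⌋ = p i :=
  Int.floor_eq_iff.2 (by exact_mod_cast mem_cube.1 hx i)

lemma cube_disjoint {p q : Fin (m+1) → ℤ} (hpq : p ≠ q) : Disjoint (cube p) (cube q) := by
  rw [Set.disjoint_left]
  intro x hp hq
  exact hpq (funext fun i => (cube_floor hp i).symm.trans (cube_floor hq i))

end LatticeAux

open LatticeAux in
/-- **Asymptotic lattice point counting in convex bodies**: for every positive integer `n` and
every `ε > 0` there exists `k₀ = k₀(ε, n)` such that for every nonempty compact convex body
`Δ ⊆ [0,1]^n` and every integer `k ≥ k₀`, the number of integer lattice points in the dilation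
`kΔ`, divided by `k^n`, differs from the volume of `Δ` by at most `ε`. -/
theorem statement_0 (n : ℕ) (hn : 0 < n) (ε : ℝ) (hε : 0 < ε) :
    ∃ k₀ : ℕ, 0 < k₀ ∧
      ∀ Δ : Set (Fin n → ℝ), Δ.Nonempty → IsCompact Δ → Convex ℝ Δ →
        Δ ⊆ Set.Icc (0 : Fin n → ℝ) 1 →
        ∀ k : ℕ, k₀ ≤ k →
          |({p : Fin n → ℤ | (fun i => (p i : ℝ)) ∈ (k : ℝ) • Δ}.ncard : ℝ) / (k : ℝ) ^ n -
              (volume Δ).toReal| ≤ ε := by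
  obtain ⟨m, rfl⟩ : ∃ m, n = m + 1 := ⟨n - 1, (Nat.succ_pred_eq_of_pos hn).symm⟩
  refine ⟨⌈((m+1 : ℝ) * 2 ^ m) / ε⌉₊ + 1, Nat.succ_pos _, ?_⟩
  intro Δ hne hcomp hconv hsub k hk
  have hk1 : 1 ≤ k := le_trans (Nat.le_add_left 1 _) hk
  have hkR : (1:ℝ) ≤ (k:ℝ) := by exact_mod_cast hk1
  have hkpos : (0:ℝ) < (k:ℝ) := lt_of_lt_of_le one_pos hkR
  set K : Set (Fin (m+1) → ℝ) := (k:ℝ) • Δ with hKdef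
  have hKcomp : IsCompact K := hcomp.smul _
  have hKconv : Convex ℝ K := hconv.smul _
  have hKsub : K ⊆ Icc 0 (fun _ => (k:ℝ)) := by
    rintro x ⟨δ, hδ, rfl⟩
    have h := hsub hδ
    rw [mem_Icc] at h ⊢
    constructor <;> intro i
    · simpa using mul_nonneg hkpos.le (by simpa using h.1 i)
    · have h1 : δ i ≤ 1 := by simpa using h.2 i
      have := mul_le_mul_of_nonneg_left h1 hkpos.le
      simpa using this
  set P : Set (Fin (m+1) → ℤ) := {p | (fun i => (p i : ℝ)) ∈ K} with hPdef
  have hPfin : P.Finite := by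
    refine Set.Finite.subset (Set.Finite.pi fun _ : Fin (m+1) => Set.finite_Icc (0:ℤ) k) ?_
    intro p hp
    have h := hKsub hp
    rw [mem_Icc] at h
    rw [Set.mem_pi]
    intro i _
    have h1 : (0:ℝ) ≤ (p i : ℝ) := by simpa using h.1 i
    have h2 : (p i : ℝ) ≤ (k:ℝ) := by simpa using h.2 i
    exact ⟨by exact_mod_cast h1, by exact_mod_cast h2⟩
  set F := hPfin.toFinset with hF
  have hcard : P.ncard = F.card := Set.ncard_eq_toFinset_card P hPfin
  -- volume of the union of cubes
  have hdisj : (↑F : Set (Fin (m+1) → ℤ)).PairwiseDisjoint cube :=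
    fun p _ q _ hpq => cube_disjoint hpq
  have hvol_union : volume (⋃ p ∈ F, cube p) = (F.card : ENNReal) := by
    rw [measure_biUnion_finset hdisj fun p _ => measurableSet_cube p]
    simp [volume_cube]
  -- upper inclusion
  have hup : (⋃ p ∈ F, cube p) ⊆ K + cbox m (m+1) := by
    rw [cbox_top]
    intro x hx
    rw [mem_iUnion₂] at hx
    obtain ⟨p, hpF, hxp⟩ := hx
    have hpP : p ∈ P := hPfin.mem_toFinset.1 hpF
    refine ⟨fun i => (p i : ℝ), hpP, fun i => x i - (p i : ℝ), ?_, funext fun i => by simp⟩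
    rw [mem_Icc]
    constructor <;> intro i
    · simpa using sub_nonneg.2 (mem_cube.1 hxp i).1
    · have := (mem_cube.1 hxp i).2
      simpa using by linarith
  -- lower inclusion
  have hdown : ero K (cbox m (m+1)) ⊆ ⋃ p ∈ F, cube p := by
    intro x hx
    set p : Fin (m+1) → ℤ := fun i => ⌊x i⌋ with hp
    have hs : (fun i => Int.fract (x i)) ∈ cbox m (m+1) := by
      rw [cbox_top, mem_Icc]
      constructor <;> intro i
      · simpa using Int.fract_nonneg (x i)
      · simpa using (Int.fract_lt_one (x i)).le
    have hxs := hx _ hs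
    have hxe : (x - fun i => Int.fract (x i)) = fun i => (p i : ℝ) := by
      funext i
      simp [hp]
    rw [hxe] at hxs
    have hpF : p ∈ F := hPfin.mem_toFinset.2 hxs
    rw [mem_iUnion₂]
    exact ⟨p, hpF, mem_cube.2 fun i => ⟨Int.floor_le (x i), Int.lt_floor_add_one (x i)⟩⟩
  -- chains
  set D : ENNReal := (m+1 : ℕ) * ENNReal.ofReal ((k:ℝ)+1) ^ m with hD
  have hchain_up : volume (K + cbox m (m+1)) ≤ volume K + D :=
    chain_up K hKcomp hKconv hkpos.le hKsub (m+1) le_rfl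
  have hchain_down : volume K ≤ volume (ero K (cbox m (m+1))) + D :=
    chain_down K hKcomp hKconv hkpos.le hKsub (m+1) le_rfl
  -- ENNReal inequalities
  have hineq1 : (F.card : ENNReal) ≤ volume K + D := by
    rw [← hvol_union]
    exact le_trans (measure_mono hup) hchain_up
  have hineq2 : volume K ≤ (F.card : ENNReal) + D := by
    rw [← hvol_union]
    refine le_trans hchain_down ?_
    have := measure_mono (μ := volume) hdown
    gcongr
  -- volume K
  have hvolK : volume K = ENNReal.ofReal ((k:ℝ)^(m+1)) * volume Δ := by
    rw [hKdef, Measure.addHaar_smul_of_nonneg _ hkpos.le]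
    congr 2
    simp [Module.finrank_fintype_fun_eq_card]
  have hΔfin : volume Δ ≠ ⊤ := by
    refine ne_top_of_le_ne_top ?_ (measure_mono hsub)
    rw [Real.volume_Icc_pi]
    exact ENNReal.prod_ne_top fun i _ => ENNReal.ofReal_ne_top
  have hKfin : volume K ≠ ⊤ := by
    rw [hvolK]
    exact ENNReal.mul_ne_top ENNReal.ofReal_ne_top hΔfin
  have hDfin : D ≠ ⊤ := by
    rw [hD]
    exact ENNReal.mul_ne_top (ENNReal.natCast_ne_top _) (ENNReal.pow_ne_top ENNReal.ofReal_ne_top)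
  -- to real
  set v : ℝ := (volume Δ).toReal with hv
  have hv0 : 0 ≤ v := ENNReal.toReal_nonneg
  set Dr : ℝ := (m+1 : ℝ) * ((k:ℝ)+1) ^ m with hDr
  have hDrtoReal : D.toReal = Dr := by
    rw [hD, hDr, ENNReal.toReal_mul, ENNReal.toReal_pow, ENNReal.toReal_ofReal (by linarith),
      ENNReal.toReal_natCast]
    push_cast
    ring
  have hvolKtoReal : (volume K).toReal = (k:ℝ)^(m+1) * v := by
    rw [hvolK, ENNReal.toReal_mul, ENNReal.toReal_ofReal (by positivity), hv]
  have hr1 : (F.card : ℝ) ≤ (k:ℝ)^(m+1) * v + Dr := by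
    have := ENNReal.toReal_mono (ENNReal.add_ne_top.2 ⟨hKfin, hDfin⟩) hineq1
    rwa [ENNReal.toReal_natCast _, ENNReal.toReal_add hKfin hDfin, hvolKtoReal, hDrtoReal] at this
  have hr2 : (k:ℝ)^(m+1) * v ≤ (F.card : ℝ) + Dr := by
    have := ENNReal.toReal_mono (ENNReal.add_ne_top.2 ⟨ENNReal.natCast_ne_top _, hDfin⟩) hineq2
    rwa [ENNReal.toReal_add (ENNReal.natCast_ne_top _) hDfin, ENNReal.toReal_natCast _,
      hvolKtoReal, hDrtoReal] at this
  -- final arithmetic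
  have hkpow : (0:ℝ) < (k:ℝ)^(m+1) := by positivity
  have key : |(F.card : ℝ) - (k:ℝ)^(m+1) * v| ≤ Dr :=
    abs_le.2 ⟨by linarith [hr2], by linarith [hr1]⟩
  have habs : |(F.card : ℝ) / (k:ℝ)^(m+1) - v| ≤ Dr / (k:ℝ)^(m+1) := by
    rw [show (F.card : ℝ) / (k:ℝ)^(m+1) - v
        = ((F.card : ℝ) - (k:ℝ)^(m+1) * v) / (k:ℝ)^(m+1) by field_simp,
      abs_div, abs_of_pos hkpow]
    exact div_le_div_of_nonneg_right key hkpow.le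
  have hbound : Dr / (k:ℝ)^(m+1) ≤ ε := by
    have h1 : ((k:ℝ)+1)^m ≤ (2*(k:ℝ))^m := by
      apply pow_le_pow_left₀ (by linarith) (by linarith)
    have h2 : Dr ≤ (m+1 : ℝ) * 2^m * (k:ℝ)^m := by
      rw [hDr, mul_pow] at *
      nlinarith [h1, hv0]
    have hkc : ((m+1 : ℝ) * 2 ^ m) / ε ≤ (k:ℝ) := by
      have hceil : (⌈((m+1 : ℝ) * 2 ^ m) / ε⌉₊ : ℝ) ≤ (k:ℝ) - 1 := by
        have : (⌈((m+1 : ℝ) * 2 ^ m) / ε⌉₊ + 1 : ℕ) ≤ k := hk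
        have := (Nat.cast_le (α := ℝ)).2 this
        push_cast at this
        linarith
      linarith [Nat.le_ceil (((m+1 : ℝ) * 2 ^ m) / ε)]
    have h3 : (m+1 : ℝ) * 2 ^ m ≤ ε * (k:ℝ) := by
      rw [div_le_iff₀ hε] at hkc
      linarith
    rw [div_le_iff₀ hkpow]
    calc Dr ≤ (m+1 : ℝ) * 2^m * (k:ℝ)^m := h2
      _ ≤ ε * (k:ℝ) * (k:ℝ)^m := by
          apply mul_le_mul_of_nonneg_right h3 (by positivity)
      _ = ε * (k:ℝ)^(m+1) := by ring
  calc |(P.ncard : ℝ) / (k:ℝ)^(m+1) - v| = |(F.card : ℝ) / (k:ℝ)^(m+1) - v| := by rw [hcard]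
    _ ≤ Dr / (k:ℝ)^(m+1) := habs
    _ ≤ ε := hbound
end

section
/- Let B → A be a homomorphism of commutative rings, let I ⊆ A be an ideal, and let M be an A-module. Assume that M is flat as a B-module and that for every m ≥ 0 the quotient I^m M / I^{m+1} M is flat as a B-module. Then for every B-module N and every m ≥ 0, the natural map (I^m M / I^{m+1} M) ⊗_B N → I^m (M ⊗_B N) / I^{m+1} (M ⊗_B N) is an isomorphism of B-modules; equivalently, (gr_I M) ⊗_B N ≅ gr_I (M ⊗_B N). -/
open TensorProduct

set_option maxHeartbeats 1000000

open LinearMap Function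

open TensorProduct LinearMap Function

lemma aux_flat_inj' {R : Type*} [CommRing R] {K P Q N K' F : Type*}
    [AddCommGroup K] [AddCommGroup P] [AddCommGroup Q] [AddCommGroup N]
    [AddCommGroup K'] [AddCommGroup F]
    [Module R K] [Module R P] [Module R Q] [Module R N] [Module R K'] [Module R F]
    (f : K →ₗ[R] P) (g : P →ₗ[R] Q) (hf : Function.Injective f)
    (hg : Function.Surjective g) (hfg : Function.Exact f g) [Module.Flat R Q]
    (ι : K' →ₗ[R] F) (π : F →ₗ[R] N) (hι : Function.Injective ι)
    (hπ : Function.Surjective π) (hexact1 : Function.Exact ι π) [Module.Flat R F] :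
    Function.Injective (LinearMap.rTensor N f) := by
  rw [injective_iff_map_eq_zero]
  intro x hx
  obtain ⟨x', rfl⟩ := LinearMap.lTensor_surjective K hπ x
  have hcomm1 : lTensor P π (rTensor F f x') = rTensor N f (lTensor K π x') := by
    rw [← LinearMap.comp_apply, lTensor_comp_rTensor, ← rTensor_comp_lTensor,
      LinearMap.comp_apply]
  have h1 : lTensor P π (rTensor F f x') = 0 := by rw [hcomm1, hx]
  have hex2 : Function.Exact (lTensor P ι) (lTensor P π) := lTensor_exact P hexact1 hπ
  obtain ⟨z, hz⟩ := (hex2 _).mp h1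
  have h2 : lTensor Q ι (rTensor K' g z) = 0 := by
    have hc : lTensor Q ι (rTensor K' g z) = rTensor F g (lTensor P ι z) := by
      rw [← LinearMap.comp_apply, lTensor_comp_rTensor, ← rTensor_comp_lTensor,
        LinearMap.comp_apply]
    rw [hc, hz, ← LinearMap.comp_apply, ← rTensor_comp,
      hfg.linearMap_comp_eq_zero, rTensor_zero, LinearMap.zero_apply]
  have hinjQ : Function.Injective (lTensor Q ι) :=
    Module.Flat.lTensor_preserves_injective_linearMap ι hι
  have h3 : rTensor K' g z = 0 := hinjQ (by rw [h2, map_zero])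
  have hex3 : Function.Exact (rTensor K' f) (rTensor K' g) := rTensor_exact K' hfg hg
  obtain ⟨w, hw⟩ := (hex3 z).mp h3
  have hinjF : Function.Injective (rTensor F f) :=
    Module.Flat.rTensor_preserves_injective_linearMap f hf
  have h4 : rTensor F f (lTensor K ι w) = rTensor F f x' := by
    rw [← LinearMap.comp_apply, rTensor_comp_lTensor, ← lTensor_comp_rTensor,
      LinearMap.comp_apply, hw, hz]
  have h5 : x' = lTensor K ι w := (hinjF h4).symm
  rw [h5, ← LinearMap.comp_apply, ← lTensor_comp, hexact1.linearMap_comp_eq_zero,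
    lTensor_zero, LinearMap.zero_apply]

/-- If `0 → K → P → Q → 0` is exact and `Q` is flat, then `K ⊗ N → P ⊗ N` is injective. -/
lemma aux_flat_inj {R : Type*} [CommRing R] {K P Q N : Type*}
    [AddCommGroup K] [AddCommGroup P] [AddCommGroup Q] [AddCommGroup N]
    [Module R K] [Module R P] [Module R Q] [Module R N]
    (f : K →ₗ[R] P) (g : P →ₗ[R] Q) (hf : Function.Injective f)
    (hg : Function.Surjective g) (hfg : Function.Exact f g) [Module.Flat R Q] :
    Function.Injective (LinearMap.rTensor N f) :=
  aux_flat_inj' (K' := LinearMap.ker (Finsupp.linearCombination R (_root_.id : N → N)))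
    (F := (N →₀ R)) f g hf hg hfg
    (LinearMap.ker (Finsupp.linearCombination R (_root_.id : N → N))).subtype
    (Finsupp.linearCombination R (_root_.id : N → N))
    (Submodule.injective_subtype _)
    (Finsupp.linearCombination_id_surjective R N)
    (LinearMap.exact_subtype_ker_map _)

open TensorProduct LinearMap Function

section helpers

variable {B A : Type*} [CommRing B] [CommRing A] [Algebra B A]
    (I : Ideal A) (M : Type*) [AddCommGroup M] [Module A M] [Module B M]
    [IsScalarTower B A M]
    (N : Type*) [AddCommGroup N] [Module B N]

lemma range_lemma (k : ℕ) :
    LinearMap.range (LinearMap.rTensor N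
        (((I ^ k • (⊤ : Submodule A M)).subtype).restrictScalars B))
      = (I ^ k • (⊤ : Submodule A (M ⊗[B] N))).restrictScalars B := by
  apply le_antisymm
  · rintro x ⟨y, rfl⟩
    show LinearMap.rTensor N _ y ∈ I ^ k • (⊤ : Submodule A (M ⊗[B] N))
    induction y using TensorProduct.induction_on with
    | zero => simpa using Submodule.zero_mem _
    | tmul p n =>
      rw [rTensor_tmul]
      have key : ∀ z, z ∈ I ^ k • (⊤ : Submodule A M) →
          z ⊗ₜ[B] n ∈ I ^ k • (⊤ : Submodule A (M ⊗[B] N)) := by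
        intro z hz
        refine Submodule.smul_induction_on hz (fun a ha x _ => ?_) (fun x y hx hy => ?_)
        · rw [← TensorProduct.smul_tmul']
          exact Submodule.smul_mem_smul ha Submodule.mem_top
        · rw [TensorProduct.add_tmul]; exact Submodule.add_mem _ hx hy
      exact key (p : M) p.2
    | add u v hu hv => rw [map_add]; exact Submodule.add_mem _ hu hv
  · intro x hx
    have hx' : x ∈ I ^ k • (⊤ : Submodule A (M ⊗[B] N)) := hx
    have key : ∀ a ∈ I ^ k, ∀ t : M ⊗[B] N, a • t ∈ LinearMap.range (LinearMap.rTensor N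
        (((I ^ k • (⊤ : Submodule A M)).subtype).restrictScalars B)) := by
      intro a ha t
      induction t using TensorProduct.induction_on with
      | zero => rw [smul_zero]; exact zero_mem _
      | tmul x n =>
        refine ⟨(⟨a • x, Submodule.smul_mem_smul ha Submodule.mem_top⟩ :
            ↥(I ^ k • (⊤ : Submodule A M))) ⊗ₜ[B] n, ?_⟩
        rw [rTensor_tmul]
        rw [TensorProduct.smul_tmul']
        rfl
      | add t1 t2 h1 h2 => rw [smul_add]; exact add_mem h1 h2
    exact Submodule.smul_induction_on hx' (fun a ha t _ => key a ha t)
      (fun t1 t2 h1 h2 => add_mem h1 h2)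

lemma inj_lemma
    (hgr : ∀ m : ℕ, Module.Flat B
      (↥(I ^ m • (⊤ : Submodule A M)) ⧸
        Submodule.comap (I ^ m • (⊤ : Submodule A M)).subtype
          (I ^ (m + 1) • (⊤ : Submodule A M)))) (k : ℕ) :
    Function.Injective (LinearMap.rTensor N
      (((I ^ k • (⊤ : Submodule A M)).subtype).restrictScalars B)) := by
  induction k with
  | zero =>
    have h0 : (I ^ 0 • (⊤ : Submodule A M)) = ⊤ := by
      rw [pow_zero, Ideal.one_eq_top, Submodule.top_smul]
    set r : M →ₗ[B] ↥(I ^ 0 • (⊤ : Submodule A M)) :=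
      { toFun := fun x => ⟨x, by rw [h0]; trivial⟩, map_add' := fun _ _ => rfl,
        map_smul' := fun _ _ => rfl } with hr
    have hli : Function.LeftInverse (LinearMap.rTensor N r)
        (LinearMap.rTensor N (((I ^ 0 • (⊤ : Submodule A M)).subtype).restrictScalars B)) := by
      intro y
      rw [← LinearMap.comp_apply, ← rTensor_comp]
      have : r ∘ₗ (((I ^ 0 • (⊤ : Submodule A M)).subtype).restrictScalars B) = LinearMap.id := by
        ext p; rfl
      rw [this, rTensor_id, LinearMap.id_apply]
    exact hli.injective
  | succ k ih =>
    have hle : I ^ (k + 1) • (⊤ : Submodule A M) ≤ I ^ k • (⊤ : Submodule A M) :=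
      Submodule.smul_mono_left (Ideal.pow_le_pow_right k.le_succ)
    set inclB : ↥(I ^ (k + 1) • (⊤ : Submodule A M)) →ₗ[B] ↥(I ^ k • (⊤ : Submodule A M)) :=
      (Submodule.inclusion hle).restrictScalars B with hinclB
    have hcomp : (((I ^ k • (⊤ : Submodule A M)).subtype).restrictScalars B) ∘ₗ inclB
        = ((I ^ (k + 1) • (⊤ : Submodule A M)).subtype).restrictScalars B := by
      ext p; rfl
    rw [← hcomp, rTensor_comp, LinearMap.coe_comp]
    refine Function.Injective.comp ih ?_
    -- injectivity of the tensored inclusion, using flatness of the graded piece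
    set Kk := Submodule.comap (I ^ k • (⊤ : Submodule A M)).subtype
          (I ^ (k + 1) • (⊤ : Submodule A M)) with hKk
    set πB : ↥(I ^ k • (⊤ : Submodule A M)) →ₗ[B] (↥(I ^ k • (⊤ : Submodule A M)) ⧸ Kk) :=
      (Kk.mkQ).restrictScalars B with hπB
    haveI := hgr k
    have hinj : Function.Injective inclB := Submodule.inclusion_injective hle
    have hsurj : Function.Surjective πB := Submodule.mkQ_surjective Kk
    have hexact : Function.Exact inclB πB := by
      intro y
      constructor
      · intro hy
        have : y ∈ Kk := by
          rwa [hπB, LinearMap.coe_restrictScalars, Submodule.mkQ_apply,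
            Submodule.Quotient.mk_eq_zero] at hy
        exact ⟨⟨(y : M), this⟩, Subtype.ext rfl⟩
      · rintro ⟨x, rfl⟩
        rw [hπB, LinearMap.coe_restrictScalars, Submodule.mkQ_apply,
          Submodule.Quotient.mk_eq_zero]
        exact x.2
    exact aux_flat_inj (N := N) inclB πB hinj hsurj hexact

end helpers


/-- Let `B → A` be a homomorphism of commutative rings, `I ⊆ A` an ideal, and `M` an `A`-module.
If `M` is flat over `B` and each quotient `I^m M / I^{m+1} M` is flat over `B`, then for every
`B`-module `N` and every `m ≥ 0` the natural map
`(I^m M / I^{m+1} M) ⊗_B N → I^m (M ⊗_B N) / I^{m+1} (M ⊗_B N)`, sending the class of `p ⊗ ν`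
(for `p ∈ I^m M`) to the class of `p ⊗ ν`, is an isomorphism of `B`-modules.  Here the target
`I^m (M ⊗_B N) / I^{m+1} (M ⊗_B N)` is realized as the image of `I^m (M ⊗_B N)` in
`(M ⊗_B N) / I^{m+1} (M ⊗_B N)`, and the isomorphism is expressed as the existence of a
`B`-linear equivalence `e` compatible with the natural map on the generators
`(class of p) ⊗ ν`. -/
theorem statement_4 (B A : Type*) [CommRing B] [CommRing A] [Algebra B A]
    (I : Ideal A) (M : Type*) [AddCommGroup M] [Module A M] [Module B M]
    [IsScalarTower B A M]
    (hM : Module.Flat B M)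
    (hgr : ∀ m : ℕ, Module.Flat B
      (↥(I ^ m • (⊤ : Submodule A M)) ⧸
        Submodule.comap (I ^ m • (⊤ : Submodule A M)).subtype
          (I ^ (m + 1) • (⊤ : Submodule A M))))
    (N : Type*) [AddCommGroup N] [Module B N] (m : ℕ) :
    ∃ e : ((↥(I ^ m • (⊤ : Submodule A M)) ⧸
          Submodule.comap (I ^ m • (⊤ : Submodule A M)).subtype
            (I ^ (m + 1) • (⊤ : Submodule A M))) ⊗[B] N) ≃ₗ[B]
        ↥(Submodule.map (I ^ (m + 1) • (⊤ : Submodule A (M ⊗[B] N))).mkQ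
            (I ^ m • (⊤ : Submodule A (M ⊗[B] N)))),
      ∀ (p : ↥(I ^ m • (⊤ : Submodule A M))) (ν : N),
        (↑(e ((Submodule.Quotient.mk p) ⊗ₜ[B] ν)) :
            (M ⊗[B] N) ⧸ I ^ (m + 1) • (⊤ : Submodule A (M ⊗[B] N))) =
          (I ^ (m + 1) • (⊤ : Submodule A (M ⊗[B] N))).mkQ ((↑p : M) ⊗ₜ[B] ν) := by
  classical
  have hle : I ^ (m + 1) • (⊤ : Submodule A M) ≤ I ^ m • (⊤ : Submodule A M) :=
    Submodule.smul_mono_left (Ideal.pow_le_pow_right m.le_succ)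
  set Km := Submodule.comap (I ^ m • (⊤ : Submodule A M)).subtype
      (I ^ (m + 1) • (⊤ : Submodule A M)) with hKm
  set Jm := I ^ m • (⊤ : Submodule A (M ⊗[B] N)) with hJm
  set Jm1 := I ^ (m + 1) • (⊤ : Submodule A (M ⊗[B] N)) with hJm1
  set fB : (↥(I ^ m • (⊤ : Submodule A M)) ⊗[B] N) →ₗ[B] M ⊗[B] N :=
    LinearMap.rTensor N (((I ^ m • (⊤ : Submodule A M)).subtype).restrictScalars B) with hfB
  set fB' : (↥(I ^ (m + 1) • (⊤ : Submodule A M)) ⊗[B] N) →ₗ[B] M ⊗[B] N :=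
    LinearMap.rTensor N (((I ^ (m + 1) • (⊤ : Submodule A M)).subtype).restrictScalars B)
    with hfB'
  set inclB : ↥(I ^ (m + 1) • (⊤ : Submodule A M)) →ₗ[B] ↥(I ^ m • (⊤ : Submodule A M)) :=
    (Submodule.inclusion hle).restrictScalars B with hinclB
  have hcomp : (((I ^ m • (⊤ : Submodule A M)).subtype).restrictScalars B) ∘ₗ inclB
      = ((I ^ (m + 1) • (⊤ : Submodule A M)).subtype).restrictScalars B := by
    ext p; rfl
  have hfcomp : fB ∘ₗ LinearMap.rTensor N inclB = fB' := by
    rw [hfB, hfB', ← LinearMap.rTensor_comp, hcomp]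
  set πB : ↥(I ^ m • (⊤ : Submodule A M)) →ₗ[B]
      (↥(I ^ m • (⊤ : Submodule A M)) ⧸ Km) := (Km.mkQ).restrictScalars B with hπB
  have hsurjπ : Function.Surjective πB := Submodule.mkQ_surjective Km
  have hexact : Function.Exact inclB πB := by
    intro y
    constructor
    · intro hy
      have hy' : y ∈ Km := by
        rwa [hπB, LinearMap.coe_restrictScalars, Submodule.mkQ_apply,
          Submodule.Quotient.mk_eq_zero] at hy
      exact ⟨⟨(y : M), hy'⟩, Subtype.ext rfl⟩
    · rintro ⟨x, rfl⟩
      rw [hπB, LinearMap.coe_restrictScalars, Submodule.mkQ_apply,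
        Submodule.Quotient.mk_eq_zero]
      exact x.2
  set g' := LinearMap.rTensor N πB with hg'def
  have hg' : Function.Surjective g' := LinearMap.rTensor_surjective N hsurjπ
  have hexact2 : Function.Exact (LinearMap.rTensor N inclB) g' :=
    rTensor_exact N hexact hsurjπ
  set qmap : (↥(I ^ m • (⊤ : Submodule A M)) ⊗[B] N) →ₗ[B] ((M ⊗[B] N) ⧸ Jm1) :=
    (Jm1.mkQ.restrictScalars B) ∘ₗ fB with hqmap
  have hrange_f : LinearMap.range fB = Jm.restrictScalars B := range_lemma I M N m
  have hrange_f' : LinearMap.range fB' = Jm1.restrictScalars B := range_lemma I M N (m + 1)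
  have hinjf : Function.Injective fB := inj_lemma I M N hgr m
  have hker : LinearMap.ker g' ≤ LinearMap.ker qmap := by
    intro x hx
    obtain ⟨y, rfl⟩ := (hexact2 x).mp hx
    have h1 : fB (LinearMap.rTensor N inclB y) = fB' y := by
      rw [← hfcomp]; rfl
    have h2 : fB' y ∈ Jm1 := by
      have : fB' y ∈ LinearMap.range fB' := LinearMap.mem_range_self _ y
      rwa [hrange_f'] at this
    show qmap _ = 0
    rw [hqmap, LinearMap.comp_apply, h1, LinearMap.coe_restrictScalars,
      Submodule.mkQ_apply, Submodule.Quotient.mk_eq_zero]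
    exact h2
  set φ0 := (LinearMap.ker g').liftQ qmap hker with hφ0
  set ψ := g'.quotKerEquivOfSurjective hg' with hψ
  set φ := φ0 ∘ₗ ψ.symm.toLinearMap with hφdef
  have hψmk : ∀ x, ψ (Submodule.Quotient.mk x) = g' x := fun x => rfl
  have hφ : ∀ x, φ (g' x) = qmap x := by
    intro x
    have h1 : ψ.symm (g' x) = Submodule.Quotient.mk x := by
      rw [LinearEquiv.symm_apply_eq, hψmk]
    rw [hφdef, LinearMap.comp_apply, LinearEquiv.coe_coe, h1, hφ0,
      Submodule.liftQ_apply]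
  -- target submodule
  have hmemT : ∀ u, φ u ∈ (Submodule.map Jm1.mkQ Jm).restrictScalars B := by
    intro u
    obtain ⟨x, rfl⟩ := hg' u
    rw [hφ]
    have h2 : fB x ∈ Jm := by
      have : fB x ∈ LinearMap.range fB := LinearMap.mem_range_self _ x
      rwa [hrange_f] at this
    exact ⟨fB x, h2, rfl⟩
  set φr := φ.codRestrict ((Submodule.map Jm1.mkQ Jm).restrictScalars B) hmemT with hφr
  have hinjφ : Function.Injective φ := by
    rw [injective_iff_map_eq_zero]
    intro u hu
    obtain ⟨x, rfl⟩ := hg' u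
    rw [hφ] at hu
    have h1 : fB x ∈ Jm1 := by
      rwa [hqmap, LinearMap.comp_apply, LinearMap.coe_restrictScalars,
        Submodule.mkQ_apply, Submodule.Quotient.mk_eq_zero] at hu
    have h2 : fB x ∈ LinearMap.range fB' := by rwa [hrange_f']
    obtain ⟨y, hy⟩ := h2
    have h3 : fB (LinearMap.rTensor N inclB y) = fB x := by
      rw [← hfcomp] at hy; exact hy
    have h4 : LinearMap.rTensor N inclB y = x := hinjf h3
    exact (hexact2 x).mpr ⟨y, h4⟩
  have hinjφr : Function.Injective φr := by
    intro u v huv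
    exact hinjφ (by simpa [hφr, Subtype.ext_iff] using huv)
  have hsurjφr : Function.Surjective φr := by
    rintro ⟨t, ht⟩
    obtain ⟨s, hs, rfl⟩ := ht
    have hs' : s ∈ LinearMap.range fB := by rwa [hrange_f]
    obtain ⟨x, rfl⟩ := hs'
    refine ⟨g' x, Subtype.ext ?_⟩
    show φ (g' x) = _
    rw [hφ]; rfl
  refine ⟨LinearEquiv.ofBijective φr ⟨hinjφr, hsurjφr⟩, ?_⟩
  intro p ν
  have h1 : (Submodule.Quotient.mk p : ↥(I ^ m • (⊤ : Submodule A M)) ⧸ Km) ⊗ₜ[B] ν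
      = g' (p ⊗ₜ[B] ν) := rfl
  show (φr ((Submodule.Quotient.mk p) ⊗ₜ[B] ν) : (M ⊗[B] N) ⧸ Jm1) = _
  have h2 : (φr ((Submodule.Quotient.mk p) ⊗ₜ[B] ν) : (M ⊗[B] N) ⧸ Jm1)
      = φ ((Submodule.Quotient.mk p) ⊗ₜ[B] ν) := rfl
  rw [h2, h1, hφ]
  rfl
end

section
/- Let B → A be a homomorphism of commutative rings, let I ⊆ A be an ideal, and let M be an A-module. Assume that M is flat as a B-module and that for every m ≥ 0 the quotient I^m M / I^{m+1} M is flat as a B-module. Then for every m ≥ 0 the A-module I^m M is flat as a B-module, and for every B-module N the natural surjective map α_m : (I^m M) ⊗_B N → I^m (M ⊗_B N) is injective, hence an isomorphism. -/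
set_option maxHeartbeats 1000000

open TensorProduct LinearMap
theorem aux_chase {R : Type*} [CommRing R]
    {X Y Z : Type*} [AddCommGroup X] [AddCommGroup Y] [AddCommGroup Z]
    [Module R X] [Module R Y] [Module R Z]
    (f : X →ₗ[R] Y) (g : Y →ₗ[R] Z) (hf : Function.Injective f)
    (hfg : Function.Exact f g) (hg : Function.Surjective g) [Module.Flat R Z]
    {N : Type*} [AddCommGroup N] [Module R N]
    {K F : Type*} [AddCommGroup K] [Module R K] [AddCommGroup F] [Module R F]
    [Module.Flat R F] (i : K →ₗ[R] F) (π : F →ₗ[R] N)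
    (hi : Function.Injective i)
    (hiπ : Function.Exact i π) (hπ : Function.Surjective π) :
    Function.Injective (rTensor N f) := by
  rw [injective_iff_map_eq_zero]
  intro a ha
  obtain ⟨x, hx⟩ := LinearMap.lTensor_surjective X hπ a
  have hb : lTensor Y π (rTensor F f x) = 0 := by
    have h1 : lTensor Y π (rTensor F f x) = rTensor N f (lTensor X π x) := by
      rw [← LinearMap.comp_apply, ← LinearMap.comp_apply,
        lTensor_comp_rTensor, rTensor_comp_lTensor]
    rw [h1, hx, ha]
  obtain ⟨k, hk⟩ := (lTensor_exact Y hiπ hπ (rTensor F f x)).mp hb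
  have hgk : rTensor K g k = 0 := by
    have hinj : Function.Injective (lTensor Z i) :=
      Module.Flat.lTensor_preserves_injective_linearMap i hi
    apply hinj
    rw [map_zero]
    have h2 : lTensor Z i (rTensor K g k) = rTensor F g (lTensor Y i k) := by
      rw [← LinearMap.comp_apply, ← LinearMap.comp_apply,
        lTensor_comp_rTensor, rTensor_comp_lTensor]
    rw [h2, hk, ← LinearMap.rTensor_comp_apply]
    have h3 : g ∘ₗ f = 0 := hfg.linearMap_comp_eq_zero
    rw [h3, rTensor_zero, LinearMap.zero_apply]
  obtain ⟨k', hk'⟩ := (rTensor_exact K hfg hg k).mp hgk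
  have h4 : rTensor F f (lTensor X i k') = rTensor F f x := by
    have h5 : rTensor F f (lTensor X i k') = lTensor Y i (rTensor K f k') := by
      rw [← LinearMap.comp_apply, ← LinearMap.comp_apply,
        lTensor_comp_rTensor, rTensor_comp_lTensor]
    rw [h5, hk', hk]
  have hx' : lTensor X i k' = x :=
    Module.Flat.rTensor_preserves_injective_linearMap (M := F) f hf h4
  have h6 : π ∘ₗ i = 0 := hiπ.linearMap_comp_eq_zero
  rw [← hx, ← hx', ← LinearMap.lTensor_comp_apply, h6, lTensor_zero, LinearMap.zero_apply]

/-- Dimension shifting: in a short exact sequence with flat quotient,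
tensoring preserves injectivity of the first map. -/
theorem rTensor_injective_of_flat_quot {R : Type*} [CommRing R]
    {X Y Z : Type*} [AddCommGroup X] [AddCommGroup Y] [AddCommGroup Z]
    [Module R X] [Module R Y] [Module R Z]
    (f : X →ₗ[R] Y) (g : Y →ₗ[R] Z) (hf : Function.Injective f)
    (hfg : Function.Exact f g) (hg : Function.Surjective g) [Module.Flat R Z]
    (N : Type*) [AddCommGroup N] [Module R N] :
    Function.Injective (rTensor N f) :=
  aux_chase (K := ↥(ker (Finsupp.linearCombination R (_root_.id : N → N)))) (F := N →₀ R)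
    f g hf hfg hg (ker (Finsupp.linearCombination R (_root_.id : N → N))).subtype
    (Finsupp.linearCombination R _root_.id) (Submodule.injective_subtype _)
    (LinearMap.exact_subtype_ker_map _) (Finsupp.linearCombination_id_surjective R N)

/-- In a short exact sequence with flat middle and flat quotient, the sub is flat. -/
theorem flat_of_flat_quot {R : Type*} [CommRing R]
    {X Y Z : Type*} [AddCommGroup X] [AddCommGroup Y] [AddCommGroup Z]
    [Module R X] [Module R Y] [Module R Z]
    (f : X →ₗ[R] Y) (g : Y →ₗ[R] Z) (hf : Function.Injective f)
    (hfg : Function.Exact f g) (hg : Function.Surjective g)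
    [Module.Flat R Y] [Module.Flat R Z] :
    Module.Flat R X := by
  rw [Module.Flat.iff_rTensor_injective']
  intro J
  have h1 : Function.Injective (lTensor J f) := by
    rw [LinearMap.lTensor_inj_iff_rTensor_inj]
    exact rTensor_injective_of_flat_quot f g hf hfg hg J
  have h2 : Function.Injective (rTensor Y J.subtype) :=
    (Module.Flat.iff_rTensor_injective' (R := R) (M := Y)).mp inferInstance J
  have key : Function.Injective ((rTensor Y J.subtype).comp (lTensor J f)) :=
    h2.comp h1
  rw [rTensor_comp_lTensor, ← lTensor_comp_rTensor, LinearMap.coe_comp] at key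
  exact key.of_comp

universe u

theorem aux_main (B A : Type*) [CommRing B] [CommRing A] [Algebra B A]
    (I : Ideal A) (M : Type*) [AddCommGroup M] [Module A M] [Module B M]
    [IsScalarTower B A M]
    (hM : Module.Flat B M)
    (hgr : ∀ m : ℕ, Module.Flat B
      (↥(I ^ m • (⊤ : Submodule A M)) ⧸
        Submodule.comap (I ^ m • (⊤ : Submodule A M)).subtype
          (I ^ (m + 1) • (⊤ : Submodule A M)))) :
    ∀ m : ℕ, Module.Flat B ↥(I ^ m • (⊤ : Submodule A M)) ∧
      ∀ (N : Type u) [AddCommGroup N] [Module B N],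
        Function.Injective (LinearMap.rTensor N
          (((I ^ m • (⊤ : Submodule A M)).subtype).restrictScalars B)) := by
  intro m
  induction m with
  | zero =>
    have h0 : I ^ 0 • (⊤ : Submodule A M) = ⊤ := by simp
    set e0 : ↥(I ^ 0 • (⊤ : Submodule A M)) ≃ₗ[A] M := LinearEquiv.ofTop _ h0 with he0
    constructor
    · exact Module.Flat.of_linearEquiv (e0.restrictScalars B)
    · intro N _ _
      set g0 : M →ₗ[B] ↥(I ^ 0 • (⊤ : Submodule A M)) :=
        (e0.symm.toLinearMap).restrictScalars B with hg0
      have hc : g0 ∘ₗ (((I ^ 0 • (⊤ : Submodule A M)).subtype).restrictScalars B)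
          = LinearMap.id := by
        ext x
        simp [hg0, he0, LinearEquiv.coe_ofTop_symm_apply]
      apply Function.LeftInverse.injective (g := rTensor N g0)
      intro x
      rw [← LinearMap.rTensor_comp_apply, hc, rTensor_id, LinearMap.id_apply]
  | succ m ih =>
    obtain ⟨ihflat, ihinj⟩ := ih
    have hle : I ^ (m + 1) • (⊤ : Submodule A M) ≤ I ^ m • (⊤ : Submodule A M) :=
      Submodule.smul_mono (Ideal.pow_le_pow_right (Nat.le_succ m)) le_rfl
    set fB : ↥(I ^ (m + 1) • (⊤ : Submodule A M)) →ₗ[B] ↥(I ^ m • (⊤ : Submodule A M)) :=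
      (Submodule.inclusion hle).restrictScalars B with hfB
    set gB : ↥(I ^ m • (⊤ : Submodule A M)) →ₗ[B]
        (↥(I ^ m • (⊤ : Submodule A M)) ⧸
          Submodule.comap (I ^ m • (⊤ : Submodule A M)).subtype
            (I ^ (m + 1) • (⊤ : Submodule A M))) :=
      ((Submodule.comap (I ^ m • (⊤ : Submodule A M)).subtype
        (I ^ (m + 1) • (⊤ : Submodule A M))).mkQ).restrictScalars B with hgB
    have hfinj : Function.Injective fB := Submodule.inclusion_injective hle
    have hgsurj : Function.Surjective gB := by
      intro y
      obtain ⟨x, hx⟩ := Submodule.mkQ_surjective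
        (Submodule.comap (I ^ m • (⊤ : Submodule A M)).subtype
          (I ^ (m + 1) • (⊤ : Submodule A M))) y
      exact ⟨x, hx⟩
    have hexact : Function.Exact fB gB := by
      rw [LinearMap.exact_iff]
      have : LinearMap.ker gB = Submodule.restrictScalars B (LinearMap.ker
          (Submodule.comap (I ^ m • (⊤ : Submodule A M)).subtype
            (I ^ (m + 1) • (⊤ : Submodule A M))).mkQ) := rfl
      rw [this, Submodule.ker_mkQ]
      have h2 : LinearMap.range fB = Submodule.restrictScalars B
          (LinearMap.range (Submodule.inclusion hle)) := rfl
      rw [h2, Submodule.range_inclusion]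
    haveI := ihflat
    haveI := hgr m
    constructor
    · exact flat_of_flat_quot fB gB hfinj hexact hgsurj
    · intro N _ _
      have hcomp : ((I ^ (m + 1) • (⊤ : Submodule A M)).subtype).restrictScalars B
          = (((I ^ m • (⊤ : Submodule A M)).subtype).restrictScalars B) ∘ₗ fB := by
        ext x; rfl
      rw [hcomp, LinearMap.rTensor_comp, LinearMap.coe_comp]
      exact (ihinj N).comp (rTensor_injective_of_flat_quot fB gB hfinj hexact hgsurj N)

/-- Let `B → A` be a homomorphism of commutative rings, `I ⊆ A` an ideal, and `M` an `A`-module.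
If `M` is flat over `B` and each quotient `I^m M / I^{m+1} M` is flat over `B`, then for every
`m ≥ 0` the module `I^m M` is flat over `B`, and for every `B`-module `N` the natural map
`α_m : (I^m M) ⊗_B N → M ⊗_B N` (given by `x ⊗ ν ↦ x ⊗ ν`) is injective with image
`I^m (M ⊗_B N)`; hence `α_m` is an isomorphism onto `I^m (M ⊗_B N)`. -/
theorem statement_5 (B A : Type*) [CommRing B] [CommRing A] [Algebra B A]
    (I : Ideal A) (M : Type*) [AddCommGroup M] [Module A M] [Module B M]
    [IsScalarTower B A M]
    (hM : Module.Flat B M)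
    (hgr : ∀ m : ℕ, Module.Flat B
      (↥(I ^ m • (⊤ : Submodule A M)) ⧸
        Submodule.comap (I ^ m • (⊤ : Submodule A M)).subtype
          (I ^ (m + 1) • (⊤ : Submodule A M))))
    (m : ℕ) (N : Type*) [AddCommGroup N] [Module B N] :
    Module.Flat B ↥(I ^ m • (⊤ : Submodule A M)) ∧
      Function.Injective (LinearMap.rTensor N
        (((I ^ m • (⊤ : Submodule A M)).subtype).restrictScalars B)) ∧
      LinearMap.range (LinearMap.rTensor N
          (((I ^ m • (⊤ : Submodule A M)).subtype).restrictScalars B)) =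
        Submodule.restrictScalars B (I ^ m • (⊤ : Submodule A (M ⊗[B] N))) := by
  obtain ⟨hflat, hinj⟩ := aux_main B A I M hM hgr m
  refine ⟨hflat, hinj N, ?_⟩
  apply le_antisymm
  · rintro t ht
    obtain ⟨s, rfl⟩ := ht
    induction s using TensorProduct.induction_on with
    | zero =>
      rw [map_zero]; exact Submodule.zero_mem _
    | tmul x n =>
      rw [LinearMap.rTensor_tmul]
      rw [Submodule.restrictScalars_mem]
      have key : ∀ z : M, z ∈ I ^ m • (⊤ : Submodule A M) →
          z ⊗ₜ[B] n ∈ (I ^ m • (⊤ : Submodule A (M ⊗[B] N))) := by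
        intro z hz
        refine Submodule.smul_induction_on hz ?_ ?_
        · intro r hr w _
          rw [← TensorProduct.smul_tmul']
          exact Submodule.smul_mem_smul hr trivial
        · intro z w hz hw
          rw [TensorProduct.add_tmul]
          exact Submodule.add_mem _ hz hw
      exact key (x : M) x.2
    | add u v hu hv =>
      rw [map_add]; exact Submodule.add_mem _ hu hv
  · intro t ht
    rw [Submodule.restrictScalars_mem] at ht
    refine Submodule.smul_induction_on ht ?_ ?_
    · intro r hr s _
      induction s using TensorProduct.induction_on with
      | zero => rw [smul_zero]; exact Submodule.zero_mem _
      | tmul x n =>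
        rw [TensorProduct.smul_tmul']
        exact ⟨(⟨r • x, Submodule.smul_mem_smul hr trivial⟩ :
          ↥(I ^ m • (⊤ : Submodule A M))) ⊗ₜ[B] n, rfl⟩
      | add u v hu hv =>
        rw [smul_add]; exact Submodule.add_mem _ (hu trivial) (hv trivial)
    · intro x y hx hy
      exact Submodule.add_mem _ hx hy
end
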